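/- The group ℤ² with word-length ℓ((p,q)) = |p| + |q| does not satisfy the Haagerup-type condition: for every constant C there exist integers k, m, n and a function f on ℤ² supported on the sphere E_k = {x : ℓ(x) = k} with ‖P_m f P_n‖ > C ‖f‖₂, where f acts by convolution on ℓ²(ℤ²) and P_j denotes the projection onto functions supported on E_j. -/

import Mathlib

open scoped Classical

/-- The `ℓ²`-norm of a finitely supported function. -/
noncomputable def fnorm2 {G : Type*} (f : MonoidAlgebra ℂ G) : ℝ :=
  Real.sqrt (∑ x ∈ f.coeff.support, ‖f.coeff x‖ ^ 2)

/-- `f` is supported on the sphere `E_k = {x : ℓ x = k}`. -/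
def SuppOnSphere {G : Type*} (ℓ : G → ℕ) (k : ℕ) (f : MonoidAlgebra ℂ G) : Prop :=
  ∀ x, f.coeff x ≠ 0 → ℓ x = k

/-- `P_m f`: the restriction (orthogonal projection in `ℓ²(G)`) of `f` to the
sphere `E_m = {x : ℓ x = m}`. -/
noncomputable def sphProj {G : Type*} (ℓ : G → ℕ) (m : ℕ) (f : MonoidAlgebra ℂ G) :
    MonoidAlgebra ℂ G :=
  MonoidAlgebra.ofCoeff (f.coeff.filter (fun x => ℓ x = m))

/-- `ℓ` is an integer-valued length function on the group `G`. -/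
def IsLengthFunction {G : Type*} [Group G] (ℓ : G → ℕ) : Prop :=
  ℓ 1 = 0 ∧ (∀ g : G, ℓ g⁻¹ = ℓ g) ∧ ∀ g h : G, ℓ (g * h) ≤ ℓ g + ℓ h

/-- The Haagerup-type condition for `(G, ℓ)` with constant `C`:
`‖P_m f P_n‖ ≤ C ‖f‖₂` for every `f` supported on the sphere `E_k`, expressed
concretely on `ℓ²(G)`: for every finitely supported `ξ` supported on `E_n`,
`‖P_m (f * ξ)‖₂ ≤ C ‖f‖₂ ‖ξ‖₂` (where `f * ξ` is the convolution). -/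
def GroupHaagerupCond {G : Type*} [Group G] (ℓ : G → ℕ) (C : ℝ) : Prop :=
  ∀ (k m n : ℕ) (f ξ : MonoidAlgebra ℂ G),
    SuppOnSphere ℓ k f → SuppOnSphere ℓ n ξ →
    fnorm2 (sphProj ℓ m (f * ξ)) ≤ C * fnorm2 f * fnorm2 ξ

/-- The word-length of the standard generating set of `ℤ²`:
`ℓ((p,q)) = |p| + |q|` (written on the multiplicative copy of `ℤ²`). -/
def lenZ2 (x : Multiplicative (ℤ × ℤ)) : ℕ :=
  (Multiplicative.toAdd x).1.natAbs + (Multiplicative.toAdd x).2.natAbs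

/-- The group `ℤ²` with its standard word-length `ℓ((p,q)) = |p| + |q|` does not
satisfy the Haagerup-type condition: for every constant `C` there are integers
`k, m, n`, a function `f` supported on the sphere `E_k` and a vector `ξ` supported on
the sphere `E_n` with `‖ξ‖₂ ≤ 1` and `‖P_m (f * ξ)‖₂ > C ‖f‖₂`, so that
`‖P_m f P_n‖ > C ‖f‖₂`. -/
def pt (j p : ℤ) : Multiplicative (ℤ × ℤ) := Multiplicative.ofAdd (p, j - p)

lemma pt_mul (j j' p p' : ℤ) : pt j p * pt j' p' = pt (j + j') (p + p') := by
  simp only [pt, ← ofAdd_add]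
  congr 1
  simp [Prod.ext_iff]; ring

lemma pt_inj (j : ℤ) : Function.Injective (pt j) := by
  intro a b h
  have := congrArg (fun x => (Multiplicative.toAdd x).1) h
  simpa [pt] using this

lemma len_pt {j p : ℤ} (h0 : 0 ≤ p) (h1 : p ≤ j) : lenZ2 (pt j p) = j.toNat := by
  simp only [lenZ2, pt, toAdd_ofAdd]
  omega

noncomputable def fSph (j : ℤ) (c : ℂ) : MonoidAlgebra ℂ (Multiplicative (ℤ × ℤ)) :=
  ∑ p ∈ Finset.Icc (1:ℤ) j, MonoidAlgebra.single (pt j p) c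

lemma fSph_apply {j : ℤ} (c : ℂ) (p : ℤ) (hp : p ∈ Finset.Icc (1:ℤ) j) :
    (fSph j c).coeff (pt j p) = c := by
  rw [fSph, MonoidAlgebra.coeff_sum, Finsupp.finset_sum_apply]
  simp only [MonoidAlgebra.single_apply, (pt_inj j).eq_iff]
  rw [Finset.sum_ite_eq' _ p (fun _ => c), if_pos hp]

lemma support_fSph (j : ℤ) (c : ℂ) :
    (fSph j c).coeff.support ⊆ (Finset.Icc (1:ℤ) j).image (pt j) := by
  rw [fSph, MonoidAlgebra.coeff_sum]
  refine (Finsupp.support_finset_sum).trans ?_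
  intro x hx
  simp only [Finset.mem_biUnion] at hx
  obtain ⟨p, hp, hx⟩ := hx
  have := Finsupp.support_single_subset hx
  simp only [Finset.mem_singleton] at this
  exact Finset.mem_image.2 ⟨p, hp, this.symm⟩

lemma fnorm2_nonneg {G : Type*} (f : MonoidAlgebra ℂ G) : 0 ≤ fnorm2 f :=
  Real.sqrt_nonneg _

lemma fnorm2_fSph_le (j : ℤ) (c : ℂ) :
    fnorm2 (fSph j c) ≤ Real.sqrt (j.toNat * ‖c‖ ^ 2) := by
  apply Real.sqrt_le_sqrt
  calc ∑ x ∈ (fSph j c).coeff.support, ‖(fSph j c).coeff x‖ ^ 2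
      ≤ ∑ x ∈ (Finset.Icc (1:ℤ) j).image (pt j), ‖(fSph j c).coeff x‖ ^ 2 :=
        Finset.sum_le_sum_of_subset_of_nonneg (support_fSph j c)
          (fun _ _ _ => by positivity)
    _ = ∑ p ∈ Finset.Icc (1:ℤ) j, ‖(fSph j c).coeff (pt j p)‖ ^ 2 :=
        Finset.sum_image (fun a _ b _ h => pt_inj j h)
    _ = ∑ p ∈ Finset.Icc (1:ℤ) j, ‖c‖ ^ 2 :=
        Finset.sum_congr rfl (fun p hp => by rw [fSph_apply c p hp])
    _ = j.toNat * ‖c‖ ^ 2 := by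
        rw [Finset.sum_const, nsmul_eq_mul]
        congr 1
        have : (Finset.Icc (1:ℤ) j).card = j.toNat := by
          rw [Int.card_Icc]; omega
        rw [this]

lemma fSph_mul (k n : ℤ) (c₁ c₂ : ℂ) :
    fSph k c₁ * fSph n c₂ =
      ∑ p ∈ Finset.Icc (1:ℤ) k, ∑ q ∈ Finset.Icc (1:ℤ) n,
        MonoidAlgebra.single (pt (k + n) (p + q)) (c₁ * c₂) := by
  rw [fSph, fSph, Finset.sum_mul_sum]
  refine Finset.sum_congr rfl fun p _ => Finset.sum_congr rfl fun q _ => ?_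
  rw [MonoidAlgebra.single_mul_single, pt_mul]

lemma fSph_mul_apply (k n s : ℤ) (c₁ c₂ : ℂ) (hs : s ∈ Finset.Icc (k+1) n) (hk : 0 ≤ k) :
    (fSph k c₁ * fSph n c₂).coeff (pt (k + n) s) = k * (c₁ * c₂) := by
  simp only [Finset.mem_Icc] at hs
  rw [fSph_mul, MonoidAlgebra.coeff_sum, Finsupp.finset_sum_apply]
  have : ∀ p ∈ Finset.Icc (1:ℤ) k,
      (∑ q ∈ Finset.Icc (1:ℤ) n,
        MonoidAlgebra.single (pt (k + n) (p + q)) (c₁ * c₂)).coeff (pt (k + n) s) = c₁ * c₂ := by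
    intro p hp
    simp only [Finset.mem_Icc] at hp
    rw [MonoidAlgebra.coeff_sum, Finsupp.finset_sum_apply]
    have hcond : ∀ q : ℤ, (pt (k+n) (p+q) = pt (k+n) s) ↔ q = s - p := by
      intro q
      rw [show pt (k+n) s = pt (k+n) ((p + (s - p))) by ring_nf, (pt_inj (k+n)).eq_iff]
      omega
    simp only [MonoidAlgebra.single_apply]
    calc (∑ q ∈ Finset.Icc (1:ℤ) n, if pt (k+n) (p+q) = pt (k+n) s then c₁*c₂ else 0)
        = ∑ q ∈ Finset.Icc (1:ℤ) n, if q = s - p then c₁*c₂ else 0 :=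
          Finset.sum_congr rfl fun q _ => by simp only [hcond q]
      _ = c₁ * c₂ := by
          rw [Finset.sum_ite_eq' _ (s-p) (fun _ => c₁*c₂), if_pos]
          simp only [Finset.mem_Icc]; omega
  rw [Finset.sum_congr rfl this, Finset.sum_const, nsmul_eq_mul]
  have h1 : (Finset.Icc (1:ℤ) k).card = k.toNat := by rw [Int.card_Icc]; omega
  rw [h1]
  have h2 : ((k.toNat : ℕ) : ℂ) = (k : ℂ) := by
    rw [← Int.cast_natCast, Int.toNat_of_nonneg hk]
  rw [h2]

lemma suppOnSphere_fSph (j : ℤ) (c : ℂ) : SuppOnSphere lenZ2 j.toNat (fSph j c) := by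
  intro x hx
  have hx' : x ∈ (fSph j c).coeff.support := Finsupp.mem_support_iff.2 hx
  obtain ⟨p, hp, rfl⟩ := Finset.mem_image.1 (support_fSph j c hx')
  simp only [Finset.mem_Icc] at hp
  exact len_pt (by omega) (by omega)

lemma lower_bound (k n : ℤ) (hk : 1 ≤ k) (hkn : k + 1 ≤ n) (c : ℂ) (hc : c ≠ 0) :
    Real.sqrt ((n - k).toNat * ‖(k:ℂ) * c‖ ^ 2) ≤
      fnorm2 (sphProj lenZ2 (k+n).toNat (fSph k 1 * fSph n c)) := by
  set g := fSph k 1 * fSph n c with hg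
  set h := sphProj lenZ2 (k+n).toNat g with hh
  apply Real.sqrt_le_sqrt
  have key : ∀ s ∈ Finset.Icc (k+1) n, h.coeff (pt (k+n) s) = (k:ℂ) * c := by
    intro s hs
    have hmem := hs
    simp only [Finset.mem_Icc] at hmem
    have hlen : lenZ2 (pt (k+n) s) = (k+n).toNat := len_pt (by omega) (by omega)
    have hval : g.coeff (pt (k+n) s) = (k:ℂ) * (1 * c) := fSph_mul_apply k n s 1 c hs (by omega)
    rw [hh, sphProj, MonoidAlgebra.coeff_ofCoeff, Finsupp.filter_apply, if_pos hlen, hval, one_mul]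
  have hT : (Finset.Icc (k+1) n).image (pt (k+n)) ⊆ h.coeff.support := by
    intro x hx
    obtain ⟨s, hs, rfl⟩ := Finset.mem_image.1 hx
    refine Finsupp.mem_support_iff.2 ?_
    rw [key s hs]
    exact mul_ne_zero (Int.cast_ne_zero.2 (by omega)) hc
  calc ((n - k).toNat : ℝ) * ‖(k:ℂ) * c‖ ^ 2
      = ∑ s ∈ Finset.Icc (k+1) n, ‖(k:ℂ) * c‖ ^ 2 := by
        rw [Finset.sum_const, nsmul_eq_mul]
        congr 1
        rw [Int.card_Icc]
        congr 1
        omega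
    _ = ∑ x ∈ (Finset.Icc (k+1) n).image (pt (k+n)), ‖h.coeff x‖ ^ 2 := by
        rw [Finset.sum_image (fun a _ b _ hab => pt_inj _ hab)]
        exact (Finset.sum_congr rfl fun s hs => by rw [key s hs]).symm
    _ ≤ ∑ x ∈ h.coeff.support, ‖h.coeff x‖ ^ 2 :=
        Finset.sum_le_sum_of_subset_of_nonneg hT (fun _ _ _ => by positivity)

theorem stmt_10 :
    ∀ C : ℝ, ∃ (k m n : ℕ) (f ξ : MonoidAlgebra ℂ (Multiplicative (ℤ × ℤ))),
      SuppOnSphere lenZ2 k f ∧ SuppOnSphere lenZ2 n ξ ∧ fnorm2 ξ ≤ 1 ∧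
      fnorm2 (sphProj lenZ2 m (f * ξ)) > C * fnorm2 f := by
  intro C
  set D : ℝ := max C 0 with hD
  have hD0 : 0 ≤ D := le_max_right _ _
  set K : ℕ := ⌊2 * D ^ 2⌋₊ + 1 with hK
  have hK1 : 1 ≤ K := Nat.le_add_left 1 _
  have hKD : 2 * D ^ 2 < (K : ℝ) := Nat.lt_floor_add_one _ |>.trans_le (by rw [hK]; push_cast; linarith [Nat.le_refl K])
  -- parameters
  set kZ : ℤ := (K : ℤ) with hkZ
  set nZ : ℤ := 2 * (K : ℤ) with hnZ
  have hk1 : 1 ≤ kZ := by rw [hkZ]; exact_mod_cast hK1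
  have hkn : kZ + 1 ≤ nZ := by omega
  set c : ℂ := (((Real.sqrt (2 * K))⁻¹ : ℝ) : ℂ) with hc
  have hsq : (0:ℝ) < Real.sqrt (2 * K) := Real.sqrt_pos.2 (by positivity)
  have hcne : c ≠ 0 := by
    simp only [hc, ne_eq, Complex.ofReal_eq_zero, inv_eq_zero]
    exact hsq.ne'
  have hnormc : ‖c‖ ^ 2 = (2 * K : ℝ)⁻¹ := by
    rw [hc, Complex.norm_real, Real.norm_eq_abs, abs_of_nonneg (by positivity), inv_pow,
      Real.sq_sqrt (by positivity)]
  refine ⟨K, 3 * K, 2 * K, fSph kZ 1, fSph nZ c, ?_, ?_, ?_, ?_⟩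
  · have := suppOnSphere_fSph kZ 1
    simpa [hkZ] using this
  · have := suppOnSphere_fSph nZ c
    have h2 : nZ.toNat = 2 * K := by omega
    rwa [h2] at this
  · refine (fnorm2_fSph_le nZ c).trans ?_
    have h2 : nZ.toNat = 2 * K := by omega
    rw [h2, hnormc]
    rw [show ((2 * K : ℕ) : ℝ) * (2 * (K:ℝ))⁻¹ = 1 by
      push_cast
      field_simp]
    rw [Real.sqrt_one]
  · have hm : (kZ + nZ).toNat = 3 * K := by omega
    have hlow := lower_bound kZ nZ hk1 hkn c hcne
    rw [hm] at hlow
    have hupper : fnorm2 (fSph kZ 1) ≤ Real.sqrt K := by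
      refine (fnorm2_fSph_le kZ 1).trans ?_
      simp [hkZ]
    have hCD : C ≤ D := le_max_left _ _
    have hfnn : 0 ≤ fnorm2 (fSph kZ 1) := fnorm2_nonneg _
    have step1 : C * fnorm2 (fSph kZ 1) ≤ D * Real.sqrt K := by
      calc C * fnorm2 (fSph kZ 1) ≤ D * fnorm2 (fSph kZ 1) := mul_le_mul_of_nonneg_right hCD hfnn
        _ ≤ D * Real.sqrt K := mul_le_mul_of_nonneg_left hupper hD0
    have step2 : D * Real.sqrt K = Real.sqrt (D ^ 2 * K) := by
      rw [Real.sqrt_mul (by positivity), Real.sqrt_sq hD0]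
    have hval : ((nZ - kZ).toNat : ℝ) * ‖(kZ:ℂ) * c‖ ^ 2 = (K:ℝ) ^ 2 / 2 := by
      have h1 : (nZ - kZ).toNat = K := by omega
      rw [h1, norm_mul, mul_pow, hnormc]
      have hcast : ((kZ:ℤ):ℂ) = ((K:ℕ):ℂ) := by rw [hkZ]; push_cast; ring
      rw [hcast, Complex.norm_natCast]
      have hKpos : (0:ℝ) < K := by exact_mod_cast hK1
      field_simp
    rw [hval] at hlow
    have step3 : Real.sqrt (D ^ 2 * K) < Real.sqrt ((K:ℝ) ^ 2 / 2) := by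
      apply Real.sqrt_lt_sqrt (by positivity)
      have hKpos : (0:ℝ) < K := by exact_mod_cast hK1
      nlinarith
    calc C * fnorm2 (fSph kZ 1) ≤ D * Real.sqrt K := step1
      _ = Real.sqrt (D ^ 2 * K) := step2
      _ < Real.sqrt ((K:ℝ) ^ 2 / 2) := step3
      _ ≤ _ := hlow
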